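/- Let x_1, …, x_n denote the n distinct roots of P in (a, b). There exist real weights w_1, …, w_n such that ∫_a^b Q(x) dx = Σ_{i=1}^{n} w_i Q(x_i) for every real polynomial Q of degree at most 2n − 1. -/

import Mathlib

open Polynomial

theorem stmt_5 (a b : ℝ) (hab : a < b) (n : ℕ) (hn : 1 ≤ n)
    (P : Polynomial ℝ) (hdeg : P.degree = (n : ℕ))
    (horth : ∀ k : ℕ, k < n → ∫ x in a..b, P.eval x * x ^ k = 0)
    (x : Fin n → ℝ) (hinj : Function.Injective x)
    (hmem : ∀ i, x i ∈ Set.Ioo a b)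
    (hroot : ∀ i, P.eval (x i) = 0) :
    ∃ w : Fin n → ℝ,
      ∀ Q : Polynomial ℝ, Q.natDegree ≤ 2 * n - 1 →
        (∫ t in a..b, Q.eval t) = ∑ i : Fin n, w i * Q.eval (x i) := by
  have hP0 : P ≠ 0 := fun h => by simp [h] at hdeg
  have hc0 : P.leadingCoeff ≠ 0 := leadingCoeff_ne_zero.mpr hP0
  set P' : Polynomial ℝ := P * C P.leadingCoeff⁻¹ with hP'def
  have hmonic : P'.Monic := monic_mul_leadingCoeff_inv hP0
  have hdeg' : P'.degree = (n : ℕ) := by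
    rw [hP'def, degree_mul_leadingCoeff_inv P hP0, hdeg]
  have hndeg' : P'.natDegree = n := natDegree_eq_of_degree_eq_some hdeg'
  -- integrability of polynomials
  have hint : ∀ R : Polynomial ℝ, IntervalIntegrable (fun t => R.eval t)
      MeasureTheory.volume a b := fun R => (R.continuous_aeval).intervalIntegrable a b
  -- orthogonality for P'
  have horth' : ∀ S : Polynomial ℝ, S.natDegree < n →
      (∫ t in a..b, (P' * S).eval t) = 0 := by
    intro S hS
    have hfun : ∀ t : ℝ, (P' * S).eval t
        = ∑ k ∈ Finset.range n, S.coeff k * P.leadingCoeff⁻¹ * (P.eval t * t ^ k) := by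
      intro t
      rw [eval_mul, eval_eq_sum_range' hS t, Finset.mul_sum]
      simp only [hP'def, eval_mul, eval_C]
      apply Finset.sum_congr rfl
      intro k _
      ring
    calc (∫ t in a..b, (P' * S).eval t)
        = ∫ t in a..b, ∑ k ∈ Finset.range n,
            S.coeff k * P.leadingCoeff⁻¹ * (P.eval t * t ^ k) := by
          exact intervalIntegral.integral_congr (fun t _ => hfun t)
      _ = ∑ k ∈ Finset.range n, ∫ t in a..b,
            S.coeff k * P.leadingCoeff⁻¹ * (P.eval t * t ^ k) := by
          apply intervalIntegral.integral_finset_sum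
          intro k _
          exact ((continuous_const.mul ((P.continuous).mul (continuous_pow k))).intervalIntegrable a b)
      _ = 0 := by
          apply Finset.sum_eq_zero
          intro k hk
          rw [intervalIntegral.integral_const_mul, horth k (Finset.mem_range.mp hk), mul_zero]
  have hinjOn : Set.InjOn x (Finset.univ : Finset (Fin n)) := fun i _ j _ h => hinj h
  refine ⟨fun i => ∫ t in a..b, (Lagrange.basis Finset.univ x i).eval t, ?_⟩
  intro Q hQ
  set S : Polynomial ℝ := Q /ₘ P' with hSdef
  set R : Polynomial ℝ := Q %ₘ P' with hRdef
  have hQeq : Q = R + P' * S := (modByMonic_add_div Q P').symm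
  have hRdeg : R.degree < (n : ℕ) := hdeg' ▸ degree_modByMonic_lt Q hmonic
  have hSdeg : S.natDegree < n := by
    rw [hSdef, natDegree_divByMonic Q hmonic, hndeg']
    omega
  -- R equals its Lagrange interpolant
  have hRinterp : Lagrange.interpolate Finset.univ x (fun i => R.eval (x i)) = R :=
    (Lagrange.eq_interpolate (f := R) hinjOn (by simpa using hRdeg)).symm
  have hRint : (∫ t in a..b, R.eval t)
      = ∑ i : Fin n, (∫ t in a..b, (Lagrange.basis Finset.univ x i).eval t) * R.eval (x i) := by
    conv_lhs => rw [← hRinterp]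
    rw [Lagrange.interpolate_apply]
    calc (∫ t in a..b, (∑ i : Fin n, C (R.eval (x i)) * Lagrange.basis Finset.univ x i).eval t)
        = ∫ t in a..b, ∑ i : Fin n, R.eval (x i) * (Lagrange.basis Finset.univ x i).eval t := by
          apply intervalIntegral.integral_congr
          intro t _
          simp [eval_finset_sum]
      _ = ∑ i : Fin n, ∫ t in a..b, R.eval (x i) * (Lagrange.basis Finset.univ x i).eval t := by
          apply intervalIntegral.integral_finset_sum
          intro i _
          exact ((continuous_const.mul ((Lagrange.basis Finset.univ x i).continuous)).intervalIntegrable a b)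
      _ = _ := by
          apply Finset.sum_congr rfl
          intro i _
          rw [intervalIntegral.integral_const_mul, mul_comm]
  have hroot' : ∀ i, P'.eval (x i) = 0 := by
    intro i; simp [hP'def, hroot i]
  have hQx : ∀ i, Q.eval (x i) = R.eval (x i) := by
    intro i
    conv_lhs => rw [hQeq]
    simp [hroot' i]
  calc (∫ t in a..b, Q.eval t)
      = ∫ t in a..b, (R.eval t + (P' * S).eval t) := by
        apply intervalIntegral.integral_congr
        intro t _
        conv_lhs => rw [hQeq]
        simp
    _ = (∫ t in a..b, R.eval t) + ∫ t in a..b, (P' * S).eval t := by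
        apply intervalIntegral.integral_add (hint R) (hint (P' * S))
    _ = ∑ i : Fin n, (∫ t in a..b, (Lagrange.basis Finset.univ x i).eval t) * Q.eval (x i) := by
        rw [horth' S hSdeg, add_zero, hRint]
        exact Finset.sum_congr rfl fun i _ => by rw [hQx i]
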